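/- arXiv:math/0403534 — 2 statements merged into one kernel-verified Lean document; each statement's English description precedes it below -/
import Mathlib

section
/- Let L be a finite meet-distributive meet-semilattice. For α ∈ L and t ∈ ℓ(α), one has t ∈ S(α) if and only if there exists a lower neighbor β of α with ℓ(β) = ℓ(α) \ {t}. Moreover, every element of S(α) is a maximal element of ℓ(α). -/
open scoped Classical

/-- An element of a poset is *join-irreducible* if it covers exactly one element. -/
def JoinIrred {L : Type*} [Preorder L] (a : L) : Prop := ∃! b : L, b ⋖ a

/-- `ell α = {p ∈ P : p ≤ α}`, the set of join-irreducible elements below `α`. -/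
def ell {L : Type*} [Preorder L] (a : L) : Set L := {p | JoinIrred p ∧ p ≤ a}

/-- The set of join-irreducible elements. -/
def Pset (L : Type*) [Preorder L] : Set L := {p | JoinIrred p}

/-- The set `N(α)` of lower neighbors of `α`, as a finset. -/
noncomputable def NF {L : Type*} [Preorder L] [Fintype L] (a : L) : Finset L :=
  Finset.univ.filter (fun b => b ⋖ a)

/-- `ell` as a finset. -/
noncomputable def ellF {L : Type*} [Preorder L] [Fintype L] (a : L) : Finset L :=
  Finset.univ.filter (fun p => JoinIrred p ∧ p ≤ a)

/-- `α' = ⋀ N(α)`, the meet of all lower neighbors of `α` (with `α' = α` if `N(α) = ∅`). -/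
noncomputable def lowMeet {L : Type*} [SemilatticeInf L] [Fintype L] (a : L) : L :=
  if h : (NF a).Nonempty then (NF a).inf' h id else a

/-- `S(α) = ℓ(α) \ ℓ(α')`. -/
noncomputable def SF {L : Type*} [SemilatticeInf L] [Fintype L] (a : L) : Finset L :=
  ellF a \ ellF (lowMeet a)

/-- An interval `[γ, β]` is Boolean if it is order-isomorphic to some `2^[k]`. -/
def IsBooleanInterval {L : Type*} [Preorder L] (γ β : L) : Prop :=
  ∃ k : ℕ, Nonempty ((Set.Icc γ β) ≃o Set (Fin k))

/-- A poset is meet-distributive if each interval `[γ, β]` such that `γ` is the meet of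
the lower neighbors of `β` in `[γ, β]` is Boolean. -/
def MeetDistributive (L : Type*) [Preorder L] : Prop :=
  ∀ γ β : L, γ ≤ β → IsGLB {x | γ ≤ x ∧ x ⋖ β} γ → IsBooleanInterval γ β

/-- A pair `(A, B)` of subsets of `P` is independent if each `α` with `B ⊆ ℓ(α)`
satisfies `A ∩ ℓ(α) ≠ ∅`. -/
def Indep {L : Type*} [Preorder L] (A B : Set L) : Prop :=
  ∀ α : L, B ⊆ ell α → (A ∩ ell α).Nonempty

/-- `⟨B⟩`, the poset ideal of `P` generated by `B ⊆ P`. -/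
def idealGen {L : Type*} [Preorder L] (B : Set L) : Set L :=
  {p | JoinIrred p ∧ ∃ q ∈ B, p ≤ q}

/-- `M(B)`, the set of maximal elements of `B`. -/
def maxElems {L : Type*} [Preorder L] (B : Set L) : Set L :=
  {b ∈ B | ∀ c ∈ B, b ≤ c → c = b}

section Aux

variable {L : Type*} [SemilatticeInf L] [Fintype L]

lemma mem_NF {a b : L} : b ∈ NF a ↔ b ⋖ a := by simp [NF]

lemma mem_ellF {a p : L} : p ∈ ellF a ↔ JoinIrred p ∧ p ≤ a := by simp [ellF]

lemma exists_le_covBy' {x a : L} (hx : x < a) : ∃ c, x ≤ c ∧ c ⋖ a := by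
  have hne : (Finset.univ.filter (fun c => x ≤ c ∧ c < a)).Nonempty :=
    ⟨x, by simp [hx]⟩
  obtain ⟨m, hm, hmax⟩ := Finset.exists_maximal hne
  simp only [Finset.mem_filter, Finset.mem_univ, true_and] at hm
  refine ⟨m, hm.1, hm.2, fun z hz hza => ?_⟩
  exact absurd (hmax (by simp [le_trans hm.1 hz.le, hza]) hz.le) hz.not_ge

lemma lowMeet_le {a b : L} (hb : b ⋖ a) : lowMeet a ≤ b := by
  have hne : (NF a).Nonempty := ⟨b, mem_NF.2 hb⟩
  rw [lowMeet, dif_pos hne]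
  exact Finset.inf'_le _ (mem_NF.2 hb)

lemma le_lowMeet' {t a : L} (hne : (NF a).Nonempty) (h : ∀ b, b ⋖ a → t ≤ b) :
    t ≤ lowMeet a := by
  rw [lowMeet, dif_pos hne]
  exact Finset.le_inf' hne id (fun b hb => h b (mem_NF.1 hb))

lemma lowMeet_le_self (a : L) : lowMeet a ≤ a := by
  rw [lowMeet]
  split
  · next hne =>
      obtain ⟨b, hb⟩ := hne
      exact le_trans (Finset.inf'_le _ hb) (mem_NF.1 hb).le
  · exact le_rfl

lemma covBy_coe_iff {γ a : L} {x y : Set.Icc γ a} : x ⋖ y ↔ (x : L) ⋖ (y : L) := by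
  constructor
  · intro hxy
    have hlt : (x : L) < y := Subtype.coe_lt_coe.2 hxy.1
    obtain ⟨c, hxc, hc⟩ := exists_le_covBy' hlt
    have hcmem : c ∈ Set.Icc γ a := ⟨le_trans x.2.1 hxc, le_trans hc.le y.2.2⟩
    rcases lt_or_eq_of_le hxc with h' | h'
    · exact absurd (Subtype.coe_lt_coe.1 (show ((⟨c, hcmem⟩ : Set.Icc γ a) : L) < y from hc.lt))
        (hxy.2 (Subtype.coe_lt_coe.1 (show (x : L) < ((⟨c, hcmem⟩ : Set.Icc γ a) : L) from h')))
    · rw [← h'] at hc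
      exact hc
  · intro hxy
    exact ⟨Subtype.coe_lt_coe.1 hxy.1,
      fun z hz hz' => hxy.2 (Subtype.coe_lt_coe.2 hz) (Subtype.coe_lt_coe.2 hz')⟩

lemma map_inf_icc {γ a : L} {k : ℕ} (e : Set.Icc γ a ≃o Set (Fin k))
    (x y : Set.Icc γ a) (hmem : (x : L) ⊓ (y : L) ∈ Set.Icc γ a) :
    e ⟨(x : L) ⊓ (y : L), hmem⟩ = e x ∩ e y := by
  apply le_antisymm
  · exact le_inf (e.monotone (Subtype.coe_le_coe.1 inf_le_left))
      (e.monotone (Subtype.coe_le_coe.1 inf_le_right))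
  · set s := e x ⊓ e y with hs
    have h1 : e.symm s ≤ x := by
      have := e.symm.monotone (inf_le_left (a := e x) (b := e y))
      rwa [e.symm_apply_apply] at this
    have h2 : e.symm s ≤ y := by
      have := e.symm.monotone (inf_le_right (a := e x) (b := e y))
      rwa [e.symm_apply_apply] at this
    have h3 : e.symm s ≤ ⟨(x : L) ⊓ (y : L), hmem⟩ :=
      Subtype.coe_le_coe.1 (le_inf (Subtype.coe_le_coe.2 h1) (Subtype.coe_le_coe.2 h2))
    have := e.monotone h3
    rwa [e.apply_symm_apply] at this

lemma map_top_icc {γ a : L} {k : ℕ} (e : Set.Icc γ a ≃o Set (Fin k))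
    (ha : a ∈ Set.Icc γ a) : e ⟨a, ha⟩ = ⊤ := by
  apply top_unique
  have h : e.symm ⊤ ≤ ⟨a, ha⟩ := Subtype.coe_le_coe.1 (e.symm ⊤).2.2
  have := e.monotone h
  rwa [e.apply_symm_apply] at this

lemma set_diff_covBy {X : Type*} {B : Set X} {i : X} (hi : i ∈ B) : B \ {i} ⋖ B := by
  constructor
  · exact Set.sdiff_singleton_ssubset.2 hi
  · intro C h1 h2
    obtain ⟨x, hxC, hxn⟩ := Set.exists_of_ssubset h1
    have hxB : x ∈ B := h2.le hxC
    have hxi : x = i := by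
      by_contra hne
      exact hxn ⟨hxB, hne⟩
    have : B ⊆ C := by
      intro b hb
      by_cases hbi : b = i
      · rw [hbi, ← hxi]; exact hxC
      · exact h1.le ⟨hb, hbi⟩
    exact absurd (le_antisymm h2.le this) h2.ne

lemma boolean_iso (h : MeetDistributive L) {a b : L} (hb : b ⋖ a) :
    ∃ k : ℕ, Nonempty (Set.Icc (lowMeet a) a ≃o Set (Fin k)) := by
  have hne : (NF a).Nonempty := ⟨b, mem_NF.2 hb⟩
  refine h _ _ (lowMeet_le_self a) ?_
  constructor
  · intro x hx; exact lowMeet_le hx.2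
  · intro y hy
    exact le_lowMeet' hne (fun c hc => hy ⟨lowMeet_le hc, hc⟩)

end Aux

section Work
variable {L : Type*} [SemilatticeInf L] [Fintype L]

/-- data extracted from the Boolean interval: each cover corresponds to the complement
of a singleton. -/
lemma cover_coatom (h : MeetDistributive L) {a b0 : L} (hb0 : b0 ⋖ a) :
    ∃ k : ℕ, ∃ e : Set.Icc (lowMeet a) a ≃o Set (Fin k),
      ∀ b : L, ∀ hb : b ⋖ a, ∃ i : Fin k,
        e ⟨b, lowMeet_le hb, hb.le⟩ = {i}ᶜ := by
  obtain ⟨k, ⟨e⟩⟩ := boolean_iso h hb0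
  refine ⟨k, e, fun b hb => ?_⟩
  have ha : a ∈ Set.Icc (lowMeet a) a := ⟨lowMeet_le_self a, le_rfl⟩
  have hcov : (⟨b, lowMeet_le hb, hb.le⟩ : Set.Icc (lowMeet a) a) ⋖ ⟨a, ha⟩ :=
    covBy_coe_iff.2 hb
  have : e ⟨b, lowMeet_le hb, hb.le⟩ ⋖ e ⟨a, ha⟩ := (apply_covBy_apply_iff e).2 hcov
  rw [map_top_icc e ha] at this
  exact (Set.isCoatom_iff _).1 (covBy_top_iff.1 this)

lemma inf_covBy (h : MeetDistributive L) {a b1 b2 : L} (h1 : b1 ⋖ a) (h2 : b2 ⋖ a)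
    (hne : b1 ≠ b2) : b1 ⊓ b2 ⋖ b2 := by
  obtain ⟨k, e, hco⟩ := cover_coatom h h1
  obtain ⟨i1, hi1⟩ := hco b1 h1
  obtain ⟨i2, hi2⟩ := hco b2 h2
  have hii : i1 ≠ i2 := by
    rintro rfl
    rw [← hi2] at hi1
    have := e.injective hi1
    exact hne (congrArg Subtype.val this)
  have hmem : b1 ⊓ b2 ∈ Set.Icc (lowMeet a) a :=
    ⟨le_inf (lowMeet_le h1) (lowMeet_le h2), le_trans inf_le_left h1.le⟩
  have hinf : e ⟨b1 ⊓ b2, hmem⟩ = e ⟨b1, lowMeet_le h1, h1.le⟩ ⊓ e ⟨b2, lowMeet_le h2, h2.le⟩ :=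
    map_inf_icc e ⟨b1, lowMeet_le h1, h1.le⟩ ⟨b2, lowMeet_le h2, h2.le⟩ hmem
  rw [hi1, hi2] at hinf
  have hset : ({i1}ᶜ ⊓ ({i2}ᶜ : Set (Fin k))) = ({i2}ᶜ : Set (Fin k)) \ {i1} := by
    ext j; simp [and_comm]
  have hcov : e ⟨b1 ⊓ b2, hmem⟩ ⋖ e ⟨b2, lowMeet_le h2, h2.le⟩ := by
    rw [hinf, hi2, hset]
    exact set_diff_covBy (by simp only [Set.mem_compl_iff, Set.mem_singleton_iff]; exact hii)
  exact covBy_coe_iff.1 ((apply_covBy_apply_iff e).1 hcov)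

lemma inf_inj (h : MeetDistributive L) {a b1 b2 b3 : L} (h1 : b1 ⋖ a) (h2 : b2 ⋖ a)
    (h3 : b3 ⋖ a) (hne : b1 ≠ b2) : b1 ⊓ b3 ≠ b2 ⊓ b3 := by
  intro heq
  obtain ⟨k, e, hco⟩ := cover_coatom h h1
  obtain ⟨i1, hi1⟩ := hco b1 h1
  obtain ⟨i2, hi2⟩ := hco b2 h2
  obtain ⟨i3, hi3⟩ := hco b3 h3
  have hii : i1 ≠ i2 := by
    rintro rfl
    rw [← hi2] at hi1
    exact hne (congrArg Subtype.val (e.injective hi1))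
  have hmem1 : b1 ⊓ b3 ∈ Set.Icc (lowMeet a) a :=
    ⟨le_inf (lowMeet_le h1) (lowMeet_le h3), le_trans inf_le_left h1.le⟩
  have hmem2 : b2 ⊓ b3 ∈ Set.Icc (lowMeet a) a :=
    ⟨le_inf (lowMeet_le h2) (lowMeet_le h3), le_trans inf_le_left h2.le⟩
  have e1 : e ⟨b1 ⊓ b3, hmem1⟩ = ({i1}ᶜ ∩ {i3}ᶜ : Set (Fin k)) := by
    rw [map_inf_icc e ⟨b1, lowMeet_le h1, h1.le⟩ ⟨b3, lowMeet_le h3, h3.le⟩ hmem1, hi1, hi3]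
  have e2 : e ⟨b2 ⊓ b3, hmem2⟩ = ({i2}ᶜ ∩ {i3}ᶜ : Set (Fin k)) := by
    rw [map_inf_icc e ⟨b2, lowMeet_le h2, h2.le⟩ ⟨b3, lowMeet_le h3, h3.le⟩ hmem2, hi2, hi3]
  have hmk : (⟨b1 ⊓ b3, hmem1⟩ : Set.Icc (lowMeet a) a) = ⟨b2 ⊓ b3, hmem2⟩ := by
    exact Subtype.ext heq
  have hsets : ({i1}ᶜ ∩ {i3}ᶜ : Set (Fin k)) = ({i2}ᶜ ∩ {i3}ᶜ : Set (Fin k)) := by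
    rw [← e1, ← e2, hmk]
  have m1 : i1 = i2 ∨ i1 = i3 := by
    by_contra hc
    push_neg at hc
    have : i1 ∈ ({i1}ᶜ ∩ {i3}ᶜ : Set (Fin k)) := hsets ▸ ⟨hc.1, hc.2⟩
    exact this.1 rfl
  have m2 : i2 = i1 ∨ i2 = i3 := by
    by_contra hc
    push_neg at hc
    have : i2 ∈ ({i2}ᶜ ∩ {i3}ᶜ : Set (Fin k)) := hsets.symm ▸ ⟨hc.1, hc.2⟩
    exact this.1 rfl
  rcases m1 with h' | h'
  · exact hii h'
  · rcases m2 with h'' | h''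
    · exact hii h''.symm
    · exact hii (h'.trans h''.symm)
end Work

section Key
variable {L : Type*} [SemilatticeInf L] [Fintype L]

lemma key (h : MeetDistributive L) (a : L) :
    (∀ t b1 b2 : L, JoinIrred t → t ≤ a → b1 ⋖ a → b2 ⋖ a → ¬t ≤ b1 → ¬t ≤ b2 → b1 = b2) ∧
    (∀ b p q : L, b ⋖ a → p ∈ ellF a → q ∈ ellF a → ¬p ≤ b → ¬q ≤ b → p = q) := by
  induction a using WellFoundedLT.induction with
  | _ a ih =>
  have hR : ∀ t b1 b2 : L, JoinIrred t → t ≤ a → b1 ⋖ a → b2 ⋖ a →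
      ¬t ≤ b1 → ¬t ≤ b2 → b1 = b2 := by
    intro t b1 b2 ht hta hb1 hb2 hn1 hn2
    by_contra hne
    rcases lt_or_eq_of_le hta with hlt | rfl
    · obtain ⟨b3, htb3, hb3⟩ := exists_le_covBy' hlt
      have c1 : b1 ⊓ b3 ⋖ b3 := inf_covBy h hb1 hb3 (by rintro rfl; exact hn1 htb3)
      have c2 : b2 ⊓ b3 ⋖ b3 := inf_covBy h hb2 hb3 (by rintro rfl; exact hn2 htb3)
      exact inf_inj h hb1 hb2 hb3 hne ((ih b3 hb3.lt).1 t _ _ ht htb3 c1 c2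
        (fun hle => hn1 (hle.trans inf_le_left)) (fun hle => hn2 (hle.trans inf_le_left)))
    · obtain ⟨b0, _, huniq⟩ := ht
      exact hne ((huniq b1 hb1).trans (huniq b2 hb2).symm)
  refine ⟨hR, ?_⟩
  intro b p q hb hp hq hnp hnq
  rw [mem_ellF] at hp hq
  by_cases hex : ∃ b2 : L, b2 ⋖ a ∧ b2 ≠ b
  · obtain ⟨b2, hb2, hb2b⟩ := hex
    have hpa : p < a := by
      rcases lt_or_eq_of_le hp.2 with h' | h'
      · exact h'
      · exfalso
        obtain ⟨b0, _, huniq⟩ := hp.1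
        rw [← h'] at hb hb2
        exact hb2b ((huniq b2 hb2).trans (huniq b hb).symm)
    obtain ⟨c, hpc, hc⟩ := exists_le_covBy' hpa
    have hcb : c ≠ b := by rintro rfl; exact hnp hpc
    have hqc : q ≤ c := by
      by_contra hqn
      exact hcb (hR q c b hq.1 hq.2 hc hb hqn hnq)
    have hδ : b ⊓ c ⋖ c := inf_covBy h hb hc (Ne.symm hcb)
    exact (ih c hc.lt).2 (b ⊓ c) p q hδ (mem_ellF.2 ⟨hp.1, hpc⟩) (mem_ellF.2 ⟨hq.1, hqc⟩)
      (fun hle => hnp (hle.trans inf_le_left)) (fun hle => hnq (hle.trans inf_le_left))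
  · push_neg at hex
    have hpe : p = a := by
      by_contra hpa
      obtain ⟨c, hpc, hc⟩ := exists_le_covBy' (lt_of_le_of_ne hp.2 hpa)
      exact hnp ((hex c hc) ▸ hpc)
    have hqe : q = a := by
      by_contra hqa
      obtain ⟨c, hpc, hc⟩ := exists_le_covBy' (lt_of_le_of_ne hq.2 hqa)
      exact hnq ((hex c hc) ▸ hpc)
    rw [hpe, hqe]

end Key


/-- `t ∈ S(α)` iff some lower neighbor `β` of `α` has
`ℓ(β) = ℓ(α) \ {t}`; moreover every element of `S(α)` is maximal in `ℓ(α)`. -/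
theorem mem_S_iff {L : Type*} [SemilatticeInf L] [Fintype L]
    (h : MeetDistributive L) (α : L) :
    (∀ t ∈ ellF α, (t ∈ SF α ↔ ∃ β : L, β ⋖ α ∧ ellF β = ellF α \ {t})) ∧
    (∀ t ∈ SF α, ∀ u ∈ ellF α, t ≤ u → u = t) := by
  have hC := (key h α).2
  have exb : ∀ t ∈ SF α, ∃ b : L, b ⋖ α ∧ ¬t ≤ b := by
    intro t hts
    obtain ⟨ht, htn'⟩ := Finset.mem_sdiff.1 hts
    have ht' := mem_ellF.1 ht
    have htn : ¬t ≤ lowMeet α := fun hle => htn' (mem_ellF.2 ⟨ht'.1, hle⟩)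
    have hne : (NF α).Nonempty := by
      by_contra hh
      rw [lowMeet, dif_neg hh] at htn
      exact htn ht'.2
    by_contra hh
    push_neg at hh
    exact htn (le_lowMeet' hne hh)
  constructor
  · intro t ht
    have ht' := mem_ellF.1 ht
    constructor
    · intro hts
      obtain ⟨b, hb, htb⟩ := exb t hts
      refine ⟨b, hb, ?_⟩
      ext p
      simp only [Finset.mem_sdiff, Finset.mem_singleton, mem_ellF]
      constructor
      · rintro ⟨hpJ, hpb⟩
        refine ⟨⟨hpJ, hpb.trans hb.le⟩, ?_⟩
        rintro rfl; exact htb hpb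
      · rintro ⟨⟨hpJ, hpa⟩, hpt⟩
        refine ⟨hpJ, ?_⟩
        by_contra hnb
        exact hpt (hC b p t hb (mem_ellF.2 ⟨hpJ, hpa⟩) ht hnb htb)
    · rintro ⟨b, hb, hell⟩
      have htb : ¬t ≤ b := by
        intro hle
        have hmem : t ∈ ellF b := mem_ellF.2 ⟨ht'.1, hle⟩
        rw [hell, Finset.mem_sdiff, Finset.mem_singleton] at hmem
        exact hmem.2 rfl
      refine Finset.mem_sdiff.2 ⟨ht, ?_⟩
      intro hmem
      exact htb ((mem_ellF.1 hmem).2.trans (lowMeet_le hb))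
  · intro t hts u hu htu
    obtain ⟨b, hb, htb⟩ := exb t hts
    by_cases hub : u ≤ b
    · exact absurd (htu.trans hub) htb
    · exact hC b u t hb hu (Finset.mem_sdiff.1 hts).1 hub htb
end

section
/- Let L be a finite meet-distributive meet-semilattice with join-irreducibles P. For α ∈ L and T ⊆ S(α), the pair (∅, T) is not an independent pair of L; moreover, for any p ∈ S(α) \ T, the pair ({p}, T) is not an independent pair of L. -/
open scoped Classical

section Aux

variable {L : Type*} [SemilatticeInf L] [Fintype L]

/-- In a finite order, below any `x < a` there is an element covered by `a`. -/
lemma aux_exists_le_covBy {x a : L} (h : x < a) : ∃ z, x ≤ z ∧ z ⋖ a := by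
  obtain ⟨z, hz, hmax⟩ := Finset.exists_maximal (s := Finset.univ.filter (fun z => x ≤ z ∧ z < a))
    ⟨x, by simp [h]⟩
  simp only [Finset.mem_filter, Finset.mem_univ, true_and] at hz
  exact ⟨z, hz.1, hz.2, fun w hzw hwa =>
    lt_irrefl z (hzw.trans_le (hmax (by simp [hz.1.trans hzw.le, hwa]) hzw.le))⟩

omit [Fintype L] in
lemma aux_icc_ordConnected (γ α : L) :
    Set.OrdConnected (Set.range ((OrderEmbedding.subtype (fun z => z ∈ Set.Icc γ α)) :
      {z // z ∈ Set.Icc γ α} ↪o L)) := by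
  simp only [OrderEmbedding.coe_subtype]
  rw [Subtype.range_coe_subtype]
  exact Set.ordConnected_Icc

omit [Fintype L] in
/-- Covering transfers between `[γ, α]` and `L`. -/
lemma aux_icc_covBy_iff {γ α : L} (x y : Set.Icc γ α) : (x : L) ⋖ (y : L) ↔ x ⋖ y :=
  (aux_icc_ordConnected γ α).apply_covBy_apply_iff _

/-- Every cover of `α` lies above `lowMeet α`. -/
lemma aux_lowMeet_le {β α : L} (h : β ⋖ α) : lowMeet α ≤ β := by
  have hβ : β ∈ NF α := by simp [NF, h]
  rw [lowMeet, dif_pos ⟨β, hβ⟩]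
  exact Finset.inf'_le id hβ

lemma aux_lowMeet_le_self (α : L) : lowMeet α ≤ α := by
  by_cases h : (NF α).Nonempty
  · obtain ⟨β, hβ⟩ := h
    simp only [NF, Finset.mem_filter] at hβ
    exact (aux_lowMeet_le hβ.2).trans hβ.2.lt.le
  · rw [lowMeet, dif_neg h]

/-- Key consequence of meet-distributivity: given covers `β1 β2 β3` of `α` with
`β3` distinct from the others, there exist covers `c1 c2` of `β3` with `cj ≤ βj`,
distinct if `β1 ≠ β2`. -/
lemma aux_key (h : MeetDistributive L) {α β1 β2 β3 : L}
    (h1 : β1 ⋖ α) (h2 : β2 ⋖ α) (h3 : β3 ⋖ α) (h13 : β1 ≠ β3) (h23 : β2 ≠ β3) :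
    ∃ c1 c2 : L, c1 ⋖ β3 ∧ c2 ⋖ β3 ∧ c1 ≤ β1 ∧ c2 ≤ β2 ∧ (β1 ≠ β2 → c1 ≠ c2) := by
  set γ := lowMeet α with hγ
  have hγα : γ ≤ α := aux_lowMeet_le_self α
  have hglb : IsGLB {x | γ ≤ x ∧ x ⋖ α} γ := by
    constructor
    · intro x hx; exact hx.1
    · intro b hb
      have hne : (NF α).Nonempty := ⟨β1, by simp [NF, h1]⟩
      rw [hγ, lowMeet, dif_pos hne]
      refine Finset.le_inf' hne id fun x hx => ?_
      simp only [NF, Finset.mem_filter, Finset.mem_univ, true_and] at hx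
      exact hb ⟨aux_lowMeet_le hx, hx⟩
  obtain ⟨k, ⟨e⟩⟩ := h γ α hγα hglb
  have hmem : ∀ {β : L}, β ⋖ α → β ∈ Set.Icc γ α := fun hc => ⟨aux_lowMeet_le hc, hc.lt.le⟩
  set aI : Set.Icc γ α := ⟨α, hγα, le_refl α⟩ with haI
  set b1 : Set.Icc γ α := ⟨β1, hmem h1⟩ with hb1
  set b2 : Set.Icc γ α := ⟨β2, hmem h2⟩ with hb2
  set b3 : Set.Icc γ α := ⟨β3, hmem h3⟩ with hb3
  have htop : e aI = Set.univ := by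
    refine le_antisymm (Set.subset_univ _) ?_
    have : e.symm Set.univ ≤ aI := Subtype.coe_le_coe.mp (e.symm Set.univ).2.2
    calc Set.univ = e (e.symm Set.univ) := (e.apply_symm_apply _).symm
    _ ≤ e aI := e.monotone this
  -- each cover gives a coatom of `Set (Fin k)`
  have hcoatom : ∀ {b : Set.Icc γ α}, (b : L) ⋖ α → ∃ i, i ∉ e b ∧ insert i (e b) = Set.univ := by
    intro b hb
    have hbc : e b ⋖ e aI := (apply_covBy_apply_iff e).2 ((aux_icc_covBy_iff b aI).1 hb)
    rw [htop] at hbc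
    have hne : e b ≠ Set.univ := hbc.lt.ne
    obtain ⟨i, hi⟩ : ∃ i, i ∉ e b := by
      by_contra hcon
      push_neg at hcon
      exact hne (Set.eq_univ_of_forall hcon)
    refine ⟨i, hi, ?_⟩
    rcases (Set.subset_univ (insert i (e b))).lt_or_eq with hlt | heq
    · exact absurd hlt (hbc.2 (Set.ssubset_insert hi))
    · exact heq
  obtain ⟨i1, hi1, hins1⟩ := hcoatom (b := b1) h1
  obtain ⟨i2, hi2, hins2⟩ := hcoatom (b := b2) h2
  obtain ⟨i3, hi3, hins3⟩ := hcoatom (b := b3) h3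
  have hmem_iff : ∀ {i : Fin k} {b : Set.Icc γ α} {j : Fin k},
      j ∉ e b → insert j (e b) = Set.univ → (i ∈ e b ↔ i ≠ j) := by
    intro i b j hj hins
    constructor
    · rintro hi rfl; exact hj hi
    · intro hij
      have : i ∈ insert j (e b) := by rw [hins]; trivial
      rcases this with h' | h'
      · exact absurd h' hij
      · exact h'
  have hdet : ∀ {b b' : Set.Icc γ α} {j j' : Fin k}, j ∉ e b → insert j (e b) = Set.univ →
      j' ∉ e b' → insert j' (e b') = Set.univ → j = j' → b = b' := by
    intro b b' j j' hj hinsj hj' hinsj' hjj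
    subst hjj
    have : e b = e b' := by
      ext x
      rw [hmem_iff hj hinsj, hmem_iff hj' hinsj']
    exact e.injective this
  have h13' : i1 ≠ i3 := fun hc =>
    h13 (congrArg Subtype.val (hdet hi1 hins1 hi3 hins3 hc))
  have h23' : i2 ≠ i3 := fun hc =>
    h23 (congrArg Subtype.val (hdet hi2 hins2 hi3 hins3 hc))
  -- the two covers of β3
  have hcov : ∀ {b : Set.Icc γ α} {j : Fin k}, j ∉ e b → insert j (e b) = Set.univ → j ≠ i3 →
      ((e.symm (e b ∩ e b3) : L) ⋖ β3 ∧ (e.symm (e b ∩ e b3) : L) ≤ (b : L)) := by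
    intro b j hj hins hji3
    have hinsert : insert j (e b ∩ e b3) = e b3 := by
      ext x
      simp only [Set.mem_insert_iff, Set.mem_inter_iff]
      constructor
      · rintro (rfl | ⟨_, hx⟩)
        · exact (hmem_iff hi3 hins3).2 hji3
        · exact hx
      · intro hx
        by_cases hxj : x = j
        · exact Or.inl hxj
        · exact Or.inr ⟨(hmem_iff hj hins).2 hxj, hx⟩
    have hjnot : j ∉ e b ∩ e b3 := fun hc => hj hc.1
    have hc1 : (e b ∩ e b3) ⋖ e b3 := by
      have := Set.covBy_insert hjnot
      rwa [hinsert] at this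
    have hc2 : e.symm (e b ∩ e b3) ⋖ b3 := by
      have := (apply_covBy_apply_iff e.symm).2 hc1
      rwa [e.symm_apply_apply] at this
    constructor
    · exact (aux_icc_covBy_iff _ _).2 hc2
    · have : e.symm (e b ∩ e b3) ≤ e.symm (e b) := e.symm.monotone Set.inter_subset_left
      rw [e.symm_apply_apply] at this
      exact Subtype.coe_le_coe.mpr this
  obtain ⟨hc1a, hc1b⟩ := hcov hi1 hins1 h13'
  obtain ⟨hc2a, hc2b⟩ := hcov hi2 hins2 h23'
  refine ⟨_, _, hc1a, hc2a, hc1b, hc2b, fun h12 => ?_⟩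
  have h12' : i1 ≠ i2 := fun hc =>
    h12 (congrArg Subtype.val (hdet hi1 hins1 hi2 hins2 hc))
  intro hcon
  have : e b1 ∩ e b3 = e b2 ∩ e b3 := by
    have := Subtype.coe_injective hcon
    have := e.symm.injective this
    exact this
  have hi2in : i2 ∈ e b1 ∩ e b3 := ⟨(hmem_iff hi1 hins1).2 (Ne.symm h12'),
    (hmem_iff hi3 hins3).2 h23'⟩
  rw [this] at hi2in
  exact hi2 hi2in.1

/-- Lemma A: a join-irreducible fails below at most one cover of `α`. -/
lemma aux_A (h : MeetDistributive L) :
    ∀ α : L, ∀ q β1 β2 : L, JoinIrred q → q ≤ α → β1 ⋖ α → β2 ⋖ α →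
      ¬ q ≤ β1 → ¬ q ≤ β2 → β1 = β2 := by
  intro α
  induction α using WellFoundedLT.induction with
  | _ α IH =>
    intro q β1 β2 hq hqα h1 h2 hn1 hn2
    by_contra h12
    rcases eq_or_lt_of_le hqα with rfl | hlt
    · obtain ⟨b, _, hub⟩ := hq
      exact h12 ((hub β1 h1).trans (hub β2 h2).symm)
    · obtain ⟨β3, hqβ3, h3⟩ := aux_exists_le_covBy hlt
      have h13 : β1 ≠ β3 := fun hc => hn1 (hc ▸ hqβ3)
      have h23 : β2 ≠ β3 := fun hc => hn2 (hc ▸ hqβ3)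
      obtain ⟨c1, c2, hc1, hc2, hle1, hle2, hne⟩ := aux_key h h1 h2 h3 h13 h23
      have hqc1 : ¬ q ≤ c1 := fun hc => hn1 (hc.trans hle1)
      have hqc2 : ¬ q ≤ c2 := fun hc => hn2 (hc.trans hle2)
      exact hne h12 (IH β3 h3.lt q c1 c2 hq hqβ3 hc1 hc2 hqc1 hqc2)

/-- Lemma B: at most one join-irreducible below `α` is not below a given cover. -/
lemma aux_B (h : MeetDistributive L) :
    ∀ α : L, ∀ β p q : L, β ⋖ α → JoinIrred p → JoinIrred q → p ≤ α → q ≤ α →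
      ¬ p ≤ β → ¬ q ≤ β → p = q := by
  intro α
  induction α using WellFoundedLT.induction with
  | _ α IH =>
    intro β p q hβ hp hq hpα hqα hnp hnq
    rcases eq_or_lt_of_le hpα with rfl | hplt
    · -- p = α, join-irreducible, so β is the unique cover
      rcases eq_or_lt_of_le hqα with rfl | hqlt
      · rfl
      · obtain ⟨z, hqz, hz⟩ := aux_exists_le_covBy hqlt
        obtain ⟨b, _, hub⟩ := hp
        have : z = β := (hub z hz).trans (hub β hβ).symm
        exact absurd (this ▸ hqz) hnq
    · rcases eq_or_lt_of_le hqα with rfl | hqlt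
      · obtain ⟨z, hpz, hz⟩ := aux_exists_le_covBy hplt
        obtain ⟨b, _, hub⟩ := hq
        have : z = β := (hub z hz).trans (hub β hβ).symm
        exact absurd (this ▸ hpz) hnp
      · obtain ⟨β2, hpβ2, h2⟩ := aux_exists_le_covBy hplt
        have hβ2ne : β ≠ β2 := fun hc => hnp (hc ▸ hpβ2)
        have hqβ2 : q ≤ β2 := by
          by_contra hnqβ2
          exact hβ2ne (aux_A h α q β β2 hq hqα hβ h2 hnq hnqβ2)
        obtain ⟨c, _, hc, _, hcβ, _, _⟩ := aux_key h hβ hβ h2 hβ2ne hβ2ne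
        have hnpc : ¬ p ≤ c := fun hx => hnp (hx.trans hcβ)
        have hnqc : ¬ q ≤ c := fun hx => hnq (hx.trans hcβ)
        exact IH β2 h2.lt c p q hc hp hq hpβ2 hqβ2 hnpc hnqc

lemma aux_SF_mem {α p : L} (hp : p ∈ SF α) :
    JoinIrred p ∧ p ≤ α ∧ ¬ p ≤ lowMeet α := by
  simp only [SF, Finset.mem_sdiff, ellF, Finset.mem_filter, Finset.mem_univ, true_and] at hp
  exact ⟨hp.1.1, hp.1.2, fun hc => hp.2 ⟨hp.1.1, hc⟩⟩

end Aux

/-- for `T ⊆ S(α)`, the pair `(∅, T)` is not independent, and for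
`p ∈ S(α) \ T` the pair `({p}, T)` is not independent. -/
theorem not_indep_of_subset_S {L : Type*} [SemilatticeInf L] [Fintype L]
    (h : MeetDistributive L) (α : L) (T : Set L) (hT : T ⊆ (↑(SF α) : Set L)) :
    ¬ Indep (∅ : Set L) T ∧ ∀ p ∈ (↑(SF α) : Set L) \ T, ¬ Indep ({p} : Set L) T := by
  have hTell : T ⊆ ell α := by
    intro t ht
    obtain ⟨h1, h2, _⟩ := aux_SF_mem (Finset.mem_coe.mp (hT ht))
    exact ⟨h1, h2⟩
  constructor
  · intro hI
    obtain ⟨x, hx, _⟩ := hI α hTell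
    exact hx
  · rintro p ⟨hpS, hpT⟩ hI
    obtain ⟨hpj, hpα, hplow⟩ := aux_SF_mem (Finset.mem_coe.mp hpS)
    -- find a cover β of α with ¬ p ≤ β
    have hne : (NF α).Nonempty := by
      by_contra hc
      rw [lowMeet, dif_neg hc] at hplow
      exact hplow hpα
    obtain ⟨β, hβmem, hnpβ⟩ : ∃ β ∈ NF α, ¬ p ≤ β := by
      by_contra hc
      push_neg at hc
      rw [lowMeet, dif_pos hne] at hplow
      exact hplow (Finset.le_inf' hne id hc)
    simp only [NF, Finset.mem_filter, Finset.mem_univ, true_and] at hβmem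
    have hTβ : T ⊆ ell β := by
      intro t ht
      obtain ⟨htj, htα, _⟩ := aux_SF_mem (Finset.mem_coe.mp (hT ht))
      refine ⟨htj, ?_⟩
      by_contra hnt
      exact hpT ((aux_B h α β p t hβmem hpj htj hpα htα hnpβ hnt) ▸ ht)
    obtain ⟨x, hx1, hx2⟩ := hI β hTβ
    rw [Set.mem_singleton_iff] at hx1
    subst hx1
    exact hnpβ hx2.2
end
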